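/- If the social choice function f : Θ → X is strongly implementable, then there exists a payment scheme P : Θ → ℚⁿ such that the direct revelation mechanism Γ_(f,P) is incentive compatible and satisfies the selective elimination condition (every bad equilibrium of Γ_(f,P) can be selectively eliminated). -/

import Mathlib

variable {n : ℕ}

def expUtil {X : Type} {Θ S : Fin n → Type} [∀ i, Fintype (Θ i)]
    (V : Fin n → X → (∀ j, Θ j) → ℚ) (p : (∀ j, Θ j) → ℚ)
    (g : (∀ j, S j) → X) (P : (∀ j, S j) → Fin n → ℚ)
    (α : ∀ j, Θ j → S j) (i : Fin n) (t : Θ i) (s : S i) : ℚ :=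
  ∑ θ : ∀ j, Θ j,
    p (Function.update θ i t) *
      (V i (g (Function.update (fun j => α j (θ j)) i s)) (Function.update θ i t) +
        P (Function.update (fun j => α j (θ j)) i s) i)

def isEquilibrium {X : Type} {Θ S : Fin n → Type} [∀ i, Fintype (Θ i)]
    (V : Fin n → X → (∀ j, Θ j) → ℚ) (p : (∀ j, Θ j) → ℚ)
    (g : (∀ j, S j) → X) (P : (∀ j, S j) → Fin n → ℚ)
    (α : ∀ j, Θ j → S j) : Prop :=
  ∀ (i : Fin n) (t : Θ i) (s : S i),
    expUtil V p g P α i t s ≤ expUtil V p g P α i t (α i t)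

def stronglyImplements {X : Type} {Θ S : Fin n → Type} [∀ i, Fintype (Θ i)]
    (V : Fin n → X → (∀ j, Θ j) → ℚ) (p : (∀ j, Θ j) → ℚ)
    (g : (∀ j, S j) → X) (P : (∀ j, S j) → Fin n → ℚ)
    (f : (∀ j, Θ j) → X) : Prop :=
  (∃ α, isEquilibrium V p g P α) ∧
    ∀ α, isEquilibrium V p g P α → (fun θ : ∀ j, Θ j => g (fun j => α j (θ j))) = f

/-- The direct revelation mechanism `Γ_(f,P)` is incentive compatible: truthful reporting
is a Bayesian equilibrium. -/
def incentiveCompatible {X : Type} {Θ : Fin n → Type} [∀ i, Fintype (Θ i)]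
    (V : Fin n → X → (∀ j, Θ j) → ℚ) (p : (∀ j, Θ j) → ℚ)
    (f : (∀ j, Θ j) → X) (P : (∀ j, Θ j) → Fin n → ℚ) : Prop :=
  isEquilibrium V p f P (fun _ t => t)

/-- An equilibrium `α` of the direct revelation mechanism `Γ_(f,P)` can be selectively
eliminated: there are an agent `i`, an outcome function `h` and payments `P̄ᵢ` depending only
on the other agents' reports `θ₋ᵢ`, such that (1) for some type `θ̄ᵢ`, deviating to the flag
strictly improves on playing `α`; (2) for every type `θᵢ`, deviating to the flag under
truthful reporting of the others is not profitable. -/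
def canSelectivelyEliminate {X : Type} {Θ : Fin n → Type} [∀ i, Fintype (Θ i)]
    (V : Fin n → X → (∀ j, Θ j) → ℚ) (p : (∀ j, Θ j) → ℚ)
    (f : (∀ j, Θ j) → X) (P : (∀ j, Θ j) → Fin n → ℚ)
    (α : ∀ j, Θ j → Θ j) : Prop :=
  ∃ (i : Fin n) (h : (∀ j, Θ j) → X) (Pb : (∀ j, Θ j) → ℚ),
    (∀ θ θ' : ∀ j, Θ j, (∀ j, j ≠ i → θ j = θ' j) → h θ = h θ' ∧ Pb θ = Pb θ') ∧
    (∃ tb : Θ i,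
      (∑ θ : ∀ j, Θ j,
          p (Function.update θ i tb) *
            (V i (f (Function.update (fun j => α j (θ j)) i (α i tb)))
                (Function.update θ i tb) +
              P (Function.update (fun j => α j (θ j)) i (α i tb)) i)) <
        ∑ θ : ∀ j, Θ j,
          p (Function.update θ i tb) *
            (V i (h (fun j => α j (θ j))) (Function.update θ i tb) +
              Pb (fun j => α j (θ j)))) ∧
    (∀ t : Θ i,
      0 ≤ ∑ θ : ∀ j, Θ j,
        p (Function.update θ i t) *
          (V i (f (Function.update θ i t)) (Function.update θ i t) +
            P (Function.update θ i t) i -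
            V i (h θ) (Function.update θ i t) - Pb θ))

lemma comp_update {Θ S : Fin n → Type} (a : ∀ j, Θ j → S j)
    (σ : ∀ j, Θ j) (i : Fin n) (t : Θ i) :
    (fun j => a j (Function.update σ i t j)) =
      Function.update (fun j => a j (σ j)) i (a i t) := by
  funext j
  rcases eq_or_ne j i with rfl | hj
  · simp
  · simp [Function.update_of_ne hj]

/-- If `f` is strongly implementable, then there is a payment scheme `P` such that the direct
revelation mechanism `Γ_(f,P)` is incentive compatible and satisfies the selective
elimination condition. -/
theorem strongly_implementable_selective_elimination {X : Type} {Θ : Fin n → Type}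
    [∀ i, Fintype (Θ i)]
    (V : Fin n → X → (∀ j, Θ j) → ℚ) (p : (∀ j, Θ j) → ℚ) (f : (∀ j, Θ j) → X)
    (h : ∃ (S : Fin n → Type) (g : (∀ j, S j) → X) (P : (∀ j, S j) → Fin n → ℚ),
      stronglyImplements V p g P f) :
    ∃ P : (∀ j, Θ j) → Fin n → ℚ,
      incentiveCompatible V p f P ∧
        ∀ α : ∀ j, Θ j → Θ j, isEquilibrium V p f P α →
          (fun θ : ∀ j, Θ j => f (fun j => α j (θ j))) ≠ f →
          canSelectivelyEliminate V p f P α := by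
  obtain ⟨S, g, P, ⟨⟨a, ha⟩, hall⟩⟩ := h
  have hf : (fun θ : ∀ j, Θ j => g (fun j => a j (θ j))) = f := hall a ha
  refine ⟨fun θ => P (fun j => a j (θ j)), ?_, ?_⟩
  · -- incentive compatibility
    intro i t s
    have key : ∀ s' : Θ i,
        expUtil V p f (fun θ => P (fun j => a j (θ j))) (fun _ t => t) i t s' =
          expUtil V p g P a i t (a i s') := by
      intro s'
      unfold expUtil
      refine Finset.sum_congr rfl fun θ _ => ?_
      simp only [← hf, comp_update]
    rw [key s, key t]
    exact ha i t (a i s)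
  · -- selective elimination of bad equilibria
    intro α hαeq hbad
    set γ : ∀ j, Θ j → S j := fun j x => a j (α j x) with hγdef
    have hγ : ¬ isEquilibrium V p g P γ := by
      intro hc
      apply hbad
      have hcomp : (fun θ : ∀ j, Θ j => f (fun j => α j (θ j))) =
          fun θ => g (fun j => γ j (θ j)) := by
        funext θ
        simp only [← hf, hγdef]
      rw [hcomp]
      exact hall γ hc
    simp only [isEquilibrium, not_forall, not_le] at hγ
    obtain ⟨i, t, s, hs⟩ := hγ
    refine ⟨i, fun θ => g (Function.update (fun j => a j (θ j)) i s),
      fun θ => P (Function.update (fun j => a j (θ j)) i s) i, ?_, ⟨t, ?_⟩, ?_⟩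
    · -- independence of i-th coordinate
      intro θ θ' hθ
      have hupd : Function.update (fun j => a j (θ j)) i s =
          Function.update (fun j => a j (θ' j)) i s := by
        funext j
        rcases eq_or_ne j i with rfl | hj
        · simp
        · simp [Function.update_of_ne hj, hθ j hj]
      exact ⟨by simp only [hupd], by simp only [hupd]⟩
    · -- condition (1): strict improvement against α
      have e1 : (∑ θ : ∀ j, Θ j,
          p (Function.update θ i t) *
            (V i (f (Function.update (fun j => α j (θ j)) i (α i t)))
                (Function.update θ i t) +
              P (fun j => a j (Function.update (fun j => α j (θ j)) i (α i t) j)) i)) =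
          expUtil V p g P γ i t (γ i t) := by
        unfold expUtil
        refine Finset.sum_congr rfl fun θ _ => ?_
        simp only [← hf, comp_update, hγdef]
      have e2 : (∑ θ : ∀ j, Θ j,
          p (Function.update θ i t) *
            (V i (g (Function.update (fun j => a j (α j (θ j))) i s))
                (Function.update θ i t) +
              P (Function.update (fun j => a j (α j (θ j))) i s) i)) =
          expUtil V p g P γ i t s := by
        unfold expUtil
        refine Finset.sum_congr rfl fun θ _ => ?_
        simp only [hγdef]
      calc (∑ θ : ∀ j, Θ j,
          p (Function.update θ i t) *
            (V i (f (Function.update (fun j => α j (θ j)) i (α i t)))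
                (Function.update θ i t) +
              P (fun j => a j (Function.update (fun j => α j (θ j)) i (α i t) j)) i))
          = expUtil V p g P γ i t (γ i t) := e1
        _ < expUtil V p g P γ i t s := hs
        _ = _ := e2.symm
    · -- condition (2): flag not profitable under truth
      intro t'
      have hle := ha i t' s
      rw [← sub_nonneg] at hle
      have e3 : expUtil V p g P a i t' (a i t') - expUtil V p g P a i t' s =
          ∑ θ : ∀ j, Θ j,
            p (Function.update θ i t') *
              (V i (f (Function.update θ i t')) (Function.update θ i t') +
                P (fun j => a j (Function.update θ i t' j)) i -
                V i (g (Function.update (fun j => a j (θ j)) i s))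
                  (Function.update θ i t') -
                P (Function.update (fun j => a j (θ j)) i s) i) := by
        unfold expUtil
        rw [← Finset.sum_sub_distrib]
        refine Finset.sum_congr rfl fun θ _ => ?_
        simp only [← hf, comp_update]
        ring
      rw [e3] at hle
      exact hle
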